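/- Let Λ_{≥0} be the Hahn series ring over ℂ with value group ℝ and support in [0,∞), and let A = ⊕_{d=d₋}^{d₊} A^d be a ℤ-graded free Λ_{≥0}-module of finite rank with grading supported in an interval [d₋,d₊]. Suppose given Λ_{≥0}-multilinear maps μ^{n,m} : A^{⊗n} → A for n ≥ 0, m ∈ ℤ, each homogeneous of degree 2 − n + m, such that μ^{n,m}(A^{⊗n}) ⊆ q^{E_m}·A for a sequence of reals with E_m → ∞ as m → ∞, and set μⁿ = ∑_m μ^{n,m} (a finite sum on each multidegree). Let b = b₀ + q^E·b₁ with b₀ ∈ ⊕_{d≤0} A^d, b₁ ∈ A and E > 0. Then the family (μⁿ(b,…,b))_{n≥0} is summable: for every c ∈ ℝ, one has μⁿ(b,…,b) ∈ q^c·A for all but finitely many n. -/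

import Mathlib

open scoped BigOperators NNReal

/-- Evaluation of the `r`-coefficient of the `i`-component, as an additive monoid hom. -/
private def evalCoeffHom (ι : Type*) (i : ι) (r : ℝ≥0) :
    (ι → HahnSeries ℝ≥0 ℂ) →+ ℂ where
  toFun x := (x i).coeff r
  map_zero' := rfl
  map_add' x y := by simp [HahnSeries.coeff_add]

private lemma coeff_sum {ι : Type*} {α : Type*} (s : Finset α)
    (f : α → (ι → HahnSeries ℝ≥0 ℂ)) (i : ι) (r : ℝ≥0) :
    ((∑ x ∈ s, f x) i).coeff r = ∑ x ∈ s, ((f x) i).coeff r :=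
  map_sum (evalCoeffHom ι i r) f s

private lemma single_one_pow (a : ℝ≥0) (k : ℕ) :
    (HahnSeries.single a (1 : ℂ)) ^ k = HahnSeries.single (k • a) (1 : ℂ) := by
  induction k with
  | zero => simp [HahnSeries.single_zero_one]
  | succ k ih =>
      rw [pow_succ, ih, HahnSeries.single_mul_single, one_mul, succ_nsmul]

private lemma coeff_single_mul_eq_zero {e r : ℝ≥0} {y : HahnSeries ℝ≥0 ℂ}
    (h : ∀ w : ℝ≥0, e + w = r → y.coeff w = 0) :
    (HahnSeries.single e (1 : ℂ) * y).coeff r = 0 := by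
  by_contra hne
  have hr : r ∈ (HahnSeries.single e (1 : ℂ) * y).support := hne
  have hmem := HahnSeries.support_mul_subset hr
  rw [Set.mem_add] at hmem
  obtain ⟨u, hu, w, hw, huw⟩ := hmem
  have hu' : u = e := HahnSeries.support_single_subset hu
  exact hw (h w (by rw [← hu']; exact huw))

/-- Convergence lemma for deformed A∞ compositions.  Model the nonnegative Novikov ring
`Λ_{≥0}` as Hahn series over `ℂ` with exponents in `ℝ≥0`, and the graded free
`Λ_{≥0}`-module `A = ⊕_{d∈[d₋,d₊]} A^d` of finite rank via a finite basis `ι` with a degree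
function `deg : ι → ℤ` taking values in `[d₋, d₊]`.  Given `Λ_{≥0}`-multilinear maps
`μ^{n,m} : A^{⊗n} → A`, homogeneous of degree `2 − n + m`, with images in `q^{E_m}·A` where
`E_m → ∞`, and `b = b₀ + q^{E}·b₁` with `b₀` of nonpositive degrees and `E > 0`, the family
`(μⁿ(b,…,b))_{n}` (with `μⁿ = ∑_m μ^{n,m}`) is summable: for every `c ∈ ℝ`, all but finitely
many of its members lie in `q^c·A`. -/
theorem convergent_curvature_summable (ι : Type*) [Fintype ι]
    (deg : ι → ℤ) (dlo dhi : ℤ) (hdeg : ∀ i, dlo ≤ deg i ∧ deg i ≤ dhi)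
    (μ : (n : ℕ) → ℤ → MultilinearMap (HahnSeries ℝ≥0 ℂ)
        (fun _ : Fin n => (ι → HahnSeries ℝ≥0 ℂ)) (ι → HahnSeries ℝ≥0 ℂ))
    (hhom : ∀ (n : ℕ) (m : ℤ) (a : Fin n → (ι → HahnSeries ℝ≥0 ℂ)) (d : Fin n → ℤ),
        (∀ l i, deg i ≠ d l → a l i = 0) →
        ∀ i, deg i ≠ (∑ l, d l) + 2 - (n : ℤ) + m → μ n m a i = 0)
    (E : ℤ → ℝ≥0) (hE : Filter.Tendsto E Filter.atTop Filter.atTop)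
    (hval : ∀ (n : ℕ) (m : ℤ) (a : Fin n → (ι → HahnSeries ℝ≥0 ℂ)) (i : ι),
        ∀ r : ℝ≥0, r < E m → (μ n m a i).coeff r = 0)
    (b₀ b₁ : ι → HahnSeries ℝ≥0 ℂ) (hb₀ : ∀ i, 0 < deg i → b₀ i = 0)
    (Eb : ℝ≥0) (hEb : 0 < Eb) :
    ∀ c : ℝ,
      {n : ℕ | ¬ ∀ (i : ι) (r : ℝ≥0), (r : ℝ) < c →
          ((∑ᶠ m : ℤ,
              μ n m (fun _ => b₀ + (HahnSeries.single Eb (1 : ℂ)) • b₁)) i).coeff r = 0}.Finite := by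
  classical
  intro c
  set sc : HahnSeries ℝ≥0 ℂ := HahnSeries.single Eb (1 : ℂ) with hsc
  set c' : ℝ≥0 := Real.toNNReal c with hc'
  obtain ⟨K, hK⟩ := Archimedean.arch c' hEb
  obtain ⟨M, hM⟩ := Filter.eventually_atTop.mp (hE.eventually_ge_atTop c')
  set D : ℤ := max dhi 0 with hD
  set N : ℕ := (M + 2 - dlo + K * D).toNat with hN
  have hNZ : M + 2 - dlo + (K : ℤ) * D ≤ (N : ℤ) := Int.self_le_toNat _
  -- Main pointwise vanishing claim.
  have key : ∀ n : ℕ, N ≤ n → ∀ (i : ι) (r : ℝ≥0), r < c' →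
      ∀ m : ℤ, ((μ n m fun _ => b₀ + sc • b₁) i).coeff r = 0 := by
    intro n hn i r hr m
    have hb : (fun _ : Fin n => b₀ + sc • b₁)
        = (fun _ : Fin n => sc • b₁) + (fun _ => b₀) := by
      funext l; exact add_comm _ _
    rw [hb, MultilinearMap.map_add_univ, coeff_sum]
    refine Finset.sum_eq_zero fun S _ => ?_
    set aS : Fin n → (ι → HahnSeries ℝ≥0 ℂ) := S.piecewise (fun _ => b₁) (fun _ => b₀)
      with haS
    have hpw : S.piecewise (fun _ : Fin n => sc • b₁) (fun _ => b₀)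
        = S.piecewise (fun l => sc • aS l) aS := by
      funext l
      by_cases hl : l ∈ S <;>
        simp [haS, Finset.piecewise_eq_of_mem, Finset.piecewise_eq_of_notMem, hl]
    rw [hpw, MultilinearMap.map_piecewise_smul, Finset.prod_const]
    have hsmul : ((sc ^ S.card • μ n m aS) i)
        = HahnSeries.single (S.card • Eb) (1 : ℂ) * (μ n m aS i) := by
      rw [Pi.smul_apply, hsc, single_one_pow, smul_eq_mul]
    rw [hsmul]
    refine coeff_single_mul_eq_zero fun w hw => ?_
    by_cases hcard : K ≤ S.card
    · exfalso
      have h1 : c' ≤ (S.card : ℝ≥0) * Eb := by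
        refine hK.trans ?_
        rw [nsmul_eq_mul]
        exact mul_le_mul_left (by exact_mod_cast hcard) Eb
      have h2 : (S.card : ℝ≥0) * Eb ≤ r := by
        rw [← hw, ← nsmul_eq_mul]; exact le_self_add
      exact absurd (h1.trans h2) (not_le.mpr hr)
    · have hcard' : S.card ≤ K := le_of_lt (not_le.mp hcard)
      have hwr : w < c' := lt_of_le_of_lt (hw ▸ le_add_self) hr
      -- expand into homogeneous components
      have hexp : aS = fun l => ∑ d ∈ Finset.Icc dlo dhi,
          (fun i' => if deg i' = d then aS l i' else 0) := by
        funext l i'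
        simp only [Finset.sum_apply, Finset.sum_ite_eq]
        rw [if_pos (Finset.mem_Icc.mpr ⟨(hdeg i').1, (hdeg i').2⟩)]
      rw [show μ n m aS = ∑ dd ∈ Fintype.piFinset (fun _ : Fin n => Finset.Icc dlo dhi),
            μ n m (fun l => fun i' => if deg i' = dd l then aS l i' else 0) from by
          conv_lhs => rw [hexp]
          exact (μ n m).map_sum_finset _ _]
      rw [coeff_sum]
      refine Finset.sum_eq_zero fun dd hdd => ?_
      have hddmem : ∀ l, dd l ∈ Finset.Icc dlo dhi :=
        fun l => (Fintype.mem_piFinset.mp hdd) l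
      by_cases hpos : ∀ l, l ∉ S → dd l ≤ 0
      · by_cases hdi : deg i = (∑ l, dd l) + 2 - (n : ℤ) + m
        · -- valuation bound: m is large
          have hsum1 : ∑ l ∈ S, dd l ≤ (S.card : ℤ) * D := by
            calc ∑ l ∈ S, dd l ≤ ∑ _l ∈ S, D :=
                  Finset.sum_le_sum fun l _ =>
                    le_trans (Finset.mem_Icc.mp (hddmem l)).2 (le_max_left _ _)
              _ = (S.card : ℤ) * D := by rw [Finset.sum_const, nsmul_eq_mul]
          have hsum2 : ∑ l ∈ Sᶜ, dd l ≤ 0 :=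
            Finset.sum_nonpos fun l hl => hpos l (Finset.mem_compl.mp hl)
          have hsplit : ∑ l ∈ S, dd l + ∑ l ∈ Sᶜ, dd l = ∑ l, dd l :=
            Finset.sum_add_sum_compl S _
          have hcardD : (S.card : ℤ) * D ≤ (K : ℤ) * D :=
            mul_le_mul_of_nonneg_right (by exact_mod_cast hcard') (le_max_right _ _)
          have hnN : (N : ℤ) ≤ (n : ℤ) := by exact_mod_cast hn
          have hdlo : dlo ≤ deg i := (hdeg i).1
          have hmM : M ≤ m := by linarith
          exact hval n m _ i w (lt_of_lt_of_le hwr (hM m hmM))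
        · -- wrong degree: term vanishes
          have h0 := hhom n m (fun l => fun i' => if deg i' = dd l then aS l i' else 0) dd
            (fun l i' h => if_neg h) i hdi
          rw [h0, HahnSeries.coeff_zero]
      · -- a positive-degree component of b₀: term vanishes
        push_neg at hpos
        obtain ⟨l, hlS, hld⟩ := hpos
        have hzero : (fun i' => if deg i' = dd l then aS l i' else 0)
            = (0 : ι → HahnSeries ℝ≥0 ℂ) := by
          funext i'
          by_cases h : deg i' = dd l
          · rw [if_pos h]
            have hb0 : aS l = b₀ := Finset.piecewise_eq_of_notMem _ _ _ hlS
            rw [hb0]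
            exact hb₀ i' (by rw [h]; exact hld)
          · exact if_neg h
        rw [(μ n m).map_coord_zero l hzero]
        simp
  -- Assemble.
  refine Set.Finite.subset (Set.finite_Iio N) ?_
  intro n hn
  simp only [Set.mem_setOf_eq] at hn
  by_contra hlt
  simp only [Set.mem_Iio, not_lt] at hlt
  refine hn fun i r hrc => ?_
  have hc0 : (0 : ℝ) < c := lt_of_le_of_lt r.coe_nonneg hrc
  have hr : r < c' := by
    have := (Real.toNNReal_lt_toNNReal_iff hc0).mpr hrc
    rwa [Real.toNNReal_coe] at this
  set F : ℤ → (ι → HahnSeries ℝ≥0 ℂ) := fun m => μ n m fun _ => b₀ + sc • b₁ with hF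
  show ((∑ᶠ m, F m) i).coeff r = 0
  by_cases hfin : (Function.support F).Finite
  · have : ((∑ᶠ m, F m) i).coeff r = ∑ᶠ m, ((F m) i).coeff r :=
      (evalCoeffHom ι i r).map_finsum hfin
    rw [this, finsum_congr fun m => key n hlt i r hr m]
    exact finsum_zero
  · rw [finsum_of_infinite_support hfin]
    simp
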